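/- In A = k[x,y,z]/(xy + z²) with I = (x,z), the symbolic powers satisfy: I^(2j) = (x^j) and I^(2j+1) = (x^j)·(x,z) = (x^{j+1}, x^j z) for all j ≥ 1 (as stated in the table: I^(1)=(x,z), I^(2)=(x), I^(3)=(x²,xz), I^(4)=(x²), I^(5)=(x³,x²z)). -/

import Mathlib

open MvPolynomial

/-- The coordinate ring `k[x,y,z]/(xy + z^2)` of an `A₁` surface singularity. -/
noncomputable def A1Ring (k : Type*) [Field k] : Type _ :=
  MvPolynomial (Fin 3) k ⧸
    Ideal.span {(X 0 * X 1 + X 2 ^ 2 : MvPolynomial (Fin 3) k)}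

noncomputable instance (k : Type*) [Field k] : CommRing (A1Ring k) :=
  Ideal.Quotient.commRing _

noncomputable def A1x (k : Type*) [Field k] : A1Ring k :=
  Ideal.Quotient.mk _ (X 0)

noncomputable def A1z (k : Type*) [Field k] : A1Ring k :=
  Ideal.Quotient.mk _ (X 2)

namespace A1Aux

variable {k : Type*} [Field k]

/-- Evaluation that kills one variable. -/
noncomputable def killOne (j : Fin 3) : MvPolynomial (Fin 3) k →ₐ[k] MvPolynomial (Fin 3) k :=
  aeval (fun i => if i = j then 0 else X i)

lemma killOne_X_self (j : Fin 3) : killOne (k := k) j (X j) = 0 := by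
  simp [killOne]

lemma killOne_X_ne (j i : Fin 3) (h : i ≠ j) : killOne (k := k) j (X i) = X i := by
  simp [killOne, h]

lemma X_dvd_sub_killOne (j : Fin 3) (p : MvPolynomial (Fin 3) k) :
    X j ∣ p - killOne j p := by
  induction p using MvPolynomial.induction_on' with
  | monomial m c =>
    by_cases h : m j = 0
    · have : killOne (k := k) j (monomial m c) = monomial m c := by
        rw [killOne, aeval_monomial, monomial_eq, algebraMap_eq]
        congr 1
        refine Finsupp.prod_congr fun i hi => ?_
        have : i ≠ j := fun e => (Finsupp.mem_support_iff.mp hi) (e ▸ h)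
        simp [this]
      rw [this, sub_self]
      exact dvd_zero _
    · have h0 : killOne (k := k) j (monomial m c) = 0 := by
        rw [killOne, aeval_monomial]
        rw [Finsupp.prod]
        rw [Finset.prod_eq_zero (Finsupp.mem_support_iff.mpr h) (by simp [zero_pow h])]
        ring
      rw [h0, sub_zero]
      exact X_dvd_monomial.mpr (Or.inr h)
  | add p q hp hq =>
    rw [map_add]
    have h2 : p + q - (killOne j p + killOne j q)
        = (p - killOne j p) + (q - killOne j q) := by ring
    rw [h2]
    exact dvd_add hp hq

lemma X_dvd_iff_killOne (j : Fin 3) (p : MvPolynomial (Fin 3) k) :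
    X j ∣ p ↔ killOne j p = 0 := by
  constructor
  · rintro ⟨c, rfl⟩
    rw [map_mul, killOne_X_self, zero_mul]
  · intro h
    have := X_dvd_sub_killOne (k := k) j p
    rwa [h, sub_zero] at this

lemma prime_X_fin3 (j : Fin 3) : Prime (X j : MvPolynomial (Fin 3) k) := by
  refine ⟨X_ne_zero j, fun h => ?_, fun p q hpq => ?_⟩
  · have := h.map (killOne (k := k) j)
    rw [killOne_X_self] at this
    exact not_isUnit_zero this
  · rw [X_dvd_iff_killOne, map_mul] at hpq
    rcases mul_eq_zero.mp hpq with h | h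
    · exact Or.inl ((X_dvd_iff_killOne j p).mpr h)
    · exact Or.inr ((X_dvd_iff_killOne j q).mpr h)

/-- Evaluation killing variables 0 and 2 (x and z). -/
noncomputable def killXZ : MvPolynomial (Fin 3) k →ₐ[k] MvPolynomial (Fin 3) k :=
  aeval (fun i => if i = 1 then X 1 else 0)

lemma killXZ_X0 : killXZ (k := k) (X 0) = 0 := by simp [killXZ]
lemma killXZ_X2 : killXZ (k := k) (X 2) = 0 := by simp [killXZ]
lemma killXZ_X1 : killXZ (k := k) (X 1) = X 1 := by simp [killXZ]

lemma sub_killXZ_mem (p : MvPolynomial (Fin 3) k) :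
    p - killXZ p ∈ Ideal.span {(X 0 : MvPolynomial (Fin 3) k), X 2} := by
  induction p using MvPolynomial.induction_on' with
  | monomial m c =>
    by_cases h0 : m 0 = 0
    · by_cases h2 : m 2 = 0
      · have : killXZ (k := k) (monomial m c) = monomial m c := by
          rw [killXZ, aeval_monomial, monomial_eq, algebraMap_eq]
          congr 1
          refine Finsupp.prod_congr fun i hi => ?_
          have hi0 : i ≠ 0 := fun e => (Finsupp.mem_support_iff.mp hi) (e ▸ h0)
          have hi2 : i ≠ 2 := fun e => (Finsupp.mem_support_iff.mp hi) (e ▸ h2)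
          have : i = 1 := by omega
          simp [this]
        rw [this, sub_self]
        exact Ideal.zero_mem _
      · have hkill : killXZ (k := k) (monomial m c) = 0 := by
          rw [killXZ, aeval_monomial, Finsupp.prod]
          rw [Finset.prod_eq_zero (Finsupp.mem_support_iff.mpr h2) (by simp [zero_pow h2])]
          ring
        rw [hkill, sub_zero]
        obtain ⟨q, hq⟩ := (X_dvd_monomial (i := (2 : Fin 3)) (R := k)).mpr (Or.inr h2)
        rw [hq]
        exact Ideal.mul_mem_right _ _ (Ideal.subset_span (by simp))
    · have hkill : killXZ (k := k) (monomial m c) = 0 := by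
        rw [killXZ, aeval_monomial, Finsupp.prod]
        rw [Finset.prod_eq_zero (Finsupp.mem_support_iff.mpr h0) (by simp [zero_pow h0])]
        ring
      rw [hkill, sub_zero]
      obtain ⟨q, hq⟩ := (X_dvd_monomial (i := (0 : Fin 3)) (R := k)).mpr (Or.inr h0)
      rw [hq]
      exact Ideal.mul_mem_right _ _ (Ideal.subset_span (by simp))
  | add p q hp hq =>
    rw [map_add]
    have h2 : p + q - (killXZ p + killXZ q)
        = (p - killXZ p) + (q - killXZ q) := by ring
    rw [h2]
    exact add_mem hp hq

lemma killXZ_eq_zero_of_mem {p : MvPolynomial (Fin 3) k}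
    (hp : p ∈ Ideal.span {(X 0 : MvPolynomial (Fin 3) k), X 2}) : killXZ p = 0 := by
  obtain ⟨u, v, huv⟩ := Ideal.mem_span_pair.mp hp
  rw [← huv, map_add, map_mul, map_mul, killXZ_X0, killXZ_X2, mul_zero, mul_zero, add_zero]

lemma mem_span_XZ_iff_killXZ {p : MvPolynomial (Fin 3) k} :
    p ∈ Ideal.span {(X 0 : MvPolynomial (Fin 3) k), X 2} ↔ killXZ p = 0 := by
  refine ⟨killXZ_eq_zero_of_mem, fun h => ?_⟩
  have := sub_killXZ_mem (k := k) p
  rwa [h, sub_zero] at this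

lemma ideal_pow_three {R : Type*} [CommRing R] (J : Ideal R) : J ^ 3 = J * J * J := by
  rw [pow_succ, pow_two]

lemma mem_span2' {α : Type*} [CommRing α] {g1 g2 w : α} (c1 c2 : α)
    (h : w = c1 * g1 + c2 * g2) : w ∈ Ideal.span {g1, g2} :=
  Ideal.mem_span_pair.mpr ⟨c1, c2, h.symm⟩

lemma mem_span3' {α : Type*} [CommRing α] {g1 g2 g3 w : α} (c1 c2 c3 : α)
    (h : w = c1 * g1 + c2 * g2 + c3 * g3) : w ∈ Ideal.span {g1, g2, g3} := by
  subst h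
  refine add_mem (add_mem ?_ ?_) ?_ <;>
    exact Ideal.mul_mem_left _ _ (Ideal.subset_span (by simp))

lemma mem_span4' {α : Type*} [CommRing α] {g1 g2 g3 g4 w : α} (c1 c2 c3 c4 : α)
    (h : w = c1 * g1 + c2 * g2 + c3 * g3 + c4 * g4) : w ∈ Ideal.span {g1, g2, g3, g4} := by
  subst h
  refine add_mem (add_mem (add_mem ?_ ?_) ?_) ?_ <;>
    exact Ideal.mul_mem_left _ _ (Ideal.subset_span (by simp))

lemma mem_span3_elim {α : Type*} [CommRing α] {g1 g2 g3 w : α}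
    (h : w ∈ Ideal.span {g1, g2, g3}) : ∃ a b c, w = a * g1 + b * g2 + c * g3 := by
  rw [show ({g1, g2, g3} : Set α) = insert g1 {g2, g3} from rfl, Ideal.mem_span_insert] at h
  obtain ⟨a, u, hu, rfl⟩ := h
  obtain ⟨b, c, hbc⟩ := Ideal.mem_span_pair.mp hu
  exact ⟨a, b, c, by rw [← hbc]; ring⟩

lemma P3_le_T :
    (Ideal.span {(X 0 : MvPolynomial (Fin 3) k), X 2}) ^ 3 ≤
      Ideal.span {(X 0 : MvPolynomial (Fin 3) k) ^ 3, X 0 ^ 2 * X 2, X 0 * X 2 ^ 2, X 2 ^ 3} := by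
  have hPP : Ideal.span {(X 0 : MvPolynomial (Fin 3) k), X 2} *
      Ideal.span {(X 0 : MvPolynomial (Fin 3) k), X 2} ≤
      Ideal.span {(X 0 : MvPolynomial (Fin 3) k) ^ 2, X 0 * X 2, X 2 ^ 2} := by
    rw [Ideal.mul_le]
    intro r hr v hv
    obtain ⟨a, b, hab⟩ := Ideal.mem_span_pair.mp hr
    obtain ⟨c, d, hcd⟩ := Ideal.mem_span_pair.mp hv
    exact mem_span3' (a * c) (a * d + b * c) (b * d) (by rw [← hab, ← hcd]; ring)
  rw [pow_succ, pow_two, Ideal.mul_le]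
  intro r hr v hv
  obtain ⟨a, b, c, habc⟩ := mem_span3_elim (hPP hr)
  obtain ⟨d, e, hde⟩ := Ideal.mem_span_pair.mp hv
  exact mem_span4' (a * d) (a * e + b * d) (b * e + c * d) (c * e)
    (by rw [habc, ← hde]; ring)

lemma main_R (a s : MvPolynomial (Fin 3) k)
    (hs : s ∉ Ideal.span {(X 0 : MvPolynomial (Fin 3) k), X 2})
    (h : a * s ∈ (Ideal.span {(X 0 : MvPolynomial (Fin 3) k), X 2}) ^ 3 ⊔
        Ideal.span {X 0 * X 1 + X 2 ^ 2}) :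
    a ∈ Ideal.span {(X 0 : MvPolynomial (Fin 3) k) ^ 2, X 0 * X 2} ⊔
        Ideal.span {X 0 * X 1 + X 2 ^ 2} := by
  -- Step A : a * s ∈ (x, z²)
  have hQ1 : (Ideal.span {(X 0 : MvPolynomial (Fin 3) k), X 2}) ^ 3 ⊔
      Ideal.span {X 0 * X 1 + X 2 ^ 2} ≤
      Ideal.span {(X 0 : MvPolynomial (Fin 3) k), X 2 ^ 2} := by
    refine sup_le (P3_le_T.trans (Ideal.span_le.mpr ?_)) (Ideal.span_le.mpr ?_)
    · rintro t ht
      simp only [Set.mem_insert_iff, Set.mem_singleton_iff] at ht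
      rcases ht with rfl | rfl | rfl | rfl
      · exact mem_span2' (X 0 ^ 2) 0 (by ring)
      · exact mem_span2' (X 0 * X 2) 0 (by ring)
      · exact mem_span2' (X 2 ^ 2) 0 (by ring)
      · exact mem_span2' 0 (X 2) (by ring)
    · rintro t rfl
      exact mem_span2' (X 1) 1 (by ring)
  obtain ⟨p, q, hpq⟩ := Ideal.mem_span_pair.mp (hQ1 h)
  -- Step B : z² divides (killOne 0 a)
  have key : killOne 0 q * X 2 ^ 2 = killOne 0 a * killOne 0 s := by
    have := congrArg (killOne (k := k) 0) hpq
    rw [map_add, map_mul, map_mul, map_mul, map_pow, killOne_X_self,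
      killOne_X_ne 0 2 (by decide), mul_zero, zero_add] at this
    exact this
  have hzs : ¬ (X 2 : MvPolynomial (Fin 3) k) ∣ killOne 0 s := by
    rintro ⟨w, hw⟩
    obtain ⟨u, hu⟩ := X_dvd_sub_killOne (k := k) 0 s
    exact hs (mem_span2' u w (by linear_combination hu + hw))
  have hz := prime_X_fin3 (k := k) 2
  have hd1 : (X 2 : MvPolynomial (Fin 3) k) ∣ killOne 0 a * killOne 0 s :=
    ⟨killOne 0 q * X 2, by linear_combination -key⟩
  have hda : (X 2 : MvPolynomial (Fin 3) k) ∣ killOne 0 a :=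
    (hz.dvd_mul.mp hd1).resolve_right hzs
  obtain ⟨c, hc⟩ := hda
  have hcs : c * killOne 0 s = killOne 0 q * X 2 := by
    apply mul_left_cancel₀ hz.ne_zero
    rw [← mul_assoc, ← hc]
    linear_combination -key
  have hdc : (X 2 : MvPolynomial (Fin 3) k) ∣ c :=
    (hz.dvd_mul.mp ⟨killOne 0 q, by linear_combination hcs⟩).resolve_right hzs
  obtain ⟨d, hd⟩ := hdc
  have hka : killOne 0 a = X 2 ^ 2 * d := by rw [hc, hd]; ring
  obtain ⟨a0, ha0⟩ := X_dvd_sub_killOne (k := k) 0 a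
  have hab : a = X 0 * (a0 - X 1 * d) + (X 0 * X 1 + X 2 ^ 2) * d := by
    linear_combination ha0 + hka
  set b : MvPolynomial (Fin 3) k := a0 - X 1 * d with hb
  -- Step D : cancel x
  have hbs_in : X 0 * (b * s) ∈ (Ideal.span {(X 0 : MvPolynomial (Fin 3) k), X 2}) ^ 3 ⊔
      Ideal.span {X 0 * X 1 + X 2 ^ 2} := by
    have he : X 0 * (b * s) = a * s - (X 0 * X 1 + X 2 ^ 2) * (d * s) := by
      rw [hab]; ring
    rw [he]
    exact sub_mem h (Ideal.mem_sup_right (Ideal.mem_span_singleton.mpr (dvd_mul_right _ _)))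
  have hT_I1 : (Ideal.span {(X 0 : MvPolynomial (Fin 3) k), X 2}) ^ 3 ⊔
      Ideal.span {X 0 * X 1 + X 2 ^ 2} ≤
      Ideal.span {(X 0 : MvPolynomial (Fin 3) k)} *
        Ideal.span {(X 0 : MvPolynomial (Fin 3) k) ^ 2, X 0 * X 2, X 2 ^ 2, X 1 * X 2} ⊔
        Ideal.span {X 0 * X 1 + X 2 ^ 2} := by
    refine sup_le (P3_le_T.trans (Ideal.span_le.mpr ?_)) le_sup_right
    rintro t ht
    simp only [Set.mem_insert_iff, Set.mem_singleton_iff] at ht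
    rcases ht with rfl | rfl | rfl | rfl
    · have he : (X 0 : MvPolynomial (Fin 3) k) ^ 3 = X 0 * X 0 ^ 2 := by ring
      rw [he]
      exact Ideal.mem_sup_left (Ideal.mul_mem_mul (Ideal.subset_span rfl)
        (Ideal.subset_span (by simp)))
    · have he : (X 0 : MvPolynomial (Fin 3) k) ^ 2 * X 2 = X 0 * (X 0 * X 2) := by ring
      rw [he]
      exact Ideal.mem_sup_left (Ideal.mul_mem_mul (Ideal.subset_span rfl)
        (Ideal.subset_span (by simp)))
    · have he : (X 0 : MvPolynomial (Fin 3) k) * X 2 ^ 2 = X 0 * (X 2 ^ 2) := by ring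
      rw [he]
      exact Ideal.mem_sup_left (Ideal.mul_mem_mul (Ideal.subset_span rfl)
        (Ideal.subset_span (by simp)))
    · have he : (X 2 : MvPolynomial (Fin 3) k) ^ 3 =
          X 0 * (-(X 1 * X 2)) + (X 0 * X 1 + X 2 ^ 2) * X 2 := by ring
      rw [he]
      refine add_mem (Ideal.mem_sup_left (Ideal.mul_mem_mul (Ideal.subset_span rfl)
        (neg_mem (Ideal.subset_span (by simp)))))
        (Ideal.mem_sup_right (Ideal.mem_span_singleton.mpr (dvd_mul_right _ _)))
  obtain ⟨u, hu, v, hv, huv⟩ := Submodule.mem_sup.mp (hT_I1 hbs_in)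
  obtain ⟨m, hm, hxm⟩ := Ideal.mem_span_singleton_mul.mp hu
  obtain ⟨g, hg⟩ := Ideal.mem_span_singleton.mp hv
  have hxprime := prime_X_fin3 (k := k) 0
  have hxf : ¬ (X 0 : MvPolynomial (Fin 3) k) ∣ X 0 * X 1 + X 2 ^ 2 := by
    rintro ⟨t, ht⟩
    have := congrArg (killOne (k := k) 0) ht
    rw [map_add, map_mul, map_mul, map_pow, killOne_X_self,
      killOne_X_ne 0 2 (by decide), zero_mul, zero_add, zero_mul] at this
    exact pow_ne_zero 2 (X_ne_zero 2) this
  have heq : X 0 * (b * s - m) = (X 0 * X 1 + X 2 ^ 2) * g := by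
    linear_combination -huv - hxm + hg
  have hdg : (X 0 : MvPolynomial (Fin 3) k) ∣ g :=
    (hxprime.dvd_mul.mp ⟨b * s - m, heq.symm⟩).resolve_left hxf
  obtain ⟨g', hg'⟩ := hdg
  have hbsm : b * s - m = (X 0 * X 1 + X 2 ^ 2) * g' := by
    apply mul_left_cancel₀ (X_ne_zero (R := k) 0)
    rw [heq, hg']; ring
  have hbsP : b * s ∈ Ideal.span {(X 0 : MvPolynomial (Fin 3) k), X 2} := by
    have hMP : Ideal.span {(X 0 : MvPolynomial (Fin 3) k) ^ 2, X 0 * X 2, X 2 ^ 2, X 1 * X 2} ≤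
        Ideal.span {(X 0 : MvPolynomial (Fin 3) k), X 2} := by
      refine Ideal.span_le.mpr ?_
      rintro t ht
      simp only [Set.mem_insert_iff, Set.mem_singleton_iff] at ht
      rcases ht with rfl | rfl | rfl | rfl
      · exact mem_span2' (X 0) 0 (by ring)
      · exact mem_span2' (X 2) 0 (by ring)
      · exact mem_span2' 0 (X 2) (by ring)
      · exact mem_span2' 0 (X 1) (by ring)
    have hfP : (X 0 * X 1 + X 2 ^ 2 : MvPolynomial (Fin 3) k) ∈
        Ideal.span {(X 0 : MvPolynomial (Fin 3) k), X 2} :=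
      mem_span2' (X 1) (X 2) (by ring)
    have he : b * s = m + (X 0 * X 1 + X 2 ^ 2) * g' := by linear_combination hbsm
    rw [he]
    exact add_mem (hMP hm) (Ideal.mul_mem_right _ _ hfP)
  -- Step E : conclude b ∈ (x, z)
  have hsig : killXZ b * killXZ s = 0 := by
    rw [← map_mul]
    exact killXZ_eq_zero_of_mem hbsP
  have hss : killXZ (k := k) s ≠ 0 := fun h0 => hs (mem_span_XZ_iff_killXZ.mpr h0)
  have hbP : b ∈ Ideal.span {(X 0 : MvPolynomial (Fin 3) k), X 2} :=
    mem_span_XZ_iff_killXZ.mpr ((mul_eq_zero.mp hsig).resolve_right hss)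
  obtain ⟨u', v', huv'⟩ := Ideal.mem_span_pair.mp hbP
  have hfin : a = (u' * X 0 ^ 2 + v' * (X 0 * X 2)) + (X 0 * X 1 + X 2 ^ 2) * d := by
    rw [hab]
    linear_combination (-(X 0 : MvPolynomial (Fin 3) k)) * huv'
  rw [hfin]
  exact add_mem (Ideal.mem_sup_left (mem_span2' u' v' rfl))
    (Ideal.mem_sup_right (Ideal.mem_span_singleton.mpr (dvd_mul_right _ _)))


section Final

variable (k : Type*) [Field k]

local notation "fP" => Ideal.span {(X 0 * X 1 + X 2 ^ 2 : MvPolynomial (Fin 3) k)}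
local notation "Qt" => MvPolynomial (Fin 3) k ⧸ Ideal.span {(X 0 * X 1 + X 2 ^ 2 : MvPolynomial (Fin 3) k)}
local notation "mk'" => Ideal.Quotient.mk (Ideal.span {(X 0 * X 1 + X 2 ^ 2 : MvPolynomial (Fin 3) k)})

set_option maxHeartbeats 1000000 in
set_option synthInstance.maxHeartbeats 400000 in
theorem final :
    {a : Qt | ∃ s ∉ (Ideal.span {mk' (X 0), mk' (X 2)} : Ideal Qt),
        a * s ∈ (Ideal.span {mk' (X 0), mk' (X 2)} : Ideal Qt) ^ 3}
      = (Ideal.span {mk' (X 0) ^ 2, mk' (X 0) * mk' (X 2)} : Ideal Qt) := by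
  classical
  have hI : (Ideal.span {mk' (X 0), mk' (X 2)} : Ideal Qt)
      = Ideal.map mk' (Ideal.span {X 0, X 2}) := by
    rw [Ideal.map_span, Set.image_insert_eq, Set.image_singleton]
  have hJ : (Ideal.span {mk' (X 0) ^ 2, mk' (X 0) * mk' (X 2)} : Ideal Qt)
      = Ideal.map mk' (Ideal.span {X 0 ^ 2, X 0 * X 2}) := by
    rw [Ideal.map_span, Set.image_insert_eq, Set.image_singleton, map_pow, map_mul]
  ext a
  simp only [Set.mem_setOf_eq, SetLike.mem_coe]
  constructor
  · rintro ⟨s, hs, h⟩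
    obtain ⟨a', rfl⟩ := Ideal.Quotient.mk_surjective (I := fP) a
    obtain ⟨s', rfl⟩ := Ideal.Quotient.mk_surjective (I := fP) s
    have hs' : s' ∉ Ideal.span {(X 0 : MvPolynomial (Fin 3) k), X 2} := by
      intro hmem
      exact hs (hI ▸ Ideal.mem_map_of_mem mk' hmem)
    have h' : a' * s' ∈ (Ideal.span {(X 0 : MvPolynomial (Fin 3) k), X 2}) ^ 3 ⊔ fP := by
      rw [← Ideal.mem_quotient_iff_mem_sup, map_mul]
      rw [hI, ← Ideal.map_pow] at h
      exact h
    have := main_R (k := k) a' s' hs' h'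
    rw [hJ, Ideal.mem_quotient_iff_mem_sup]
    exact this
  · intro ha
    obtain ⟨c1, c2, hc⟩ := Ideal.mem_span_pair.mp ha
    refine ⟨mk' (X 1), ?_, ?_⟩
    · intro hy
      rw [hI, Ideal.mem_quotient_iff_mem_sup] at hy
      obtain ⟨w1, hw1, w2, hw2, hw⟩ := Submodule.mem_sup.mp hy
      obtain ⟨g, hg⟩ := Ideal.mem_span_singleton.mp hw2
      have h0 : killXZ (k := k) (X 1) = 0 := by
        rw [← hw, map_add, killXZ_eq_zero_of_mem hw1, hg, map_mul, map_add, map_mul,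
          map_pow, killXZ_X0, killXZ_X2, zero_mul]
        ring
      rw [killXZ_X1] at h0
      exact X_ne_zero 1 h0
    · have hrel : mk' (X 0) * mk' (X 1) = -(mk' (X 2) ^ 2) := by
        have h00 : mk' (X 0 * X 1 + X 2 ^ 2) = 0 :=
          Ideal.Quotient.eq_zero_iff_mem.mpr (Ideal.subset_span rfl)
        rw [map_add, map_mul, map_pow] at h00
        linear_combination h00
      have hxI : mk' (X 0) ∈ Ideal.span {mk' (X 0), mk' (X 2)} :=
        Ideal.subset_span (by simp)
      have hzI : mk' (X 2) ∈ Ideal.span {mk' (X 0), mk' (X 2)} :=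
        Ideal.subset_span (by simp)
      have h3 : ∀ r1 r2 r3 : Qt,
          r1 ∈ Ideal.span {mk' (X 0), mk' (X 2)} →
          r2 ∈ Ideal.span {mk' (X 0), mk' (X 2)} →
          r3 ∈ Ideal.span {mk' (X 0), mk' (X 2)} →
          r1 * r2 * r3 ∈ (Ideal.span {mk' (X 0), mk' (X 2)} : Ideal Qt) ^ 3 := by
        intro r1 r2 r3 h1 h2' h3'
        rw [ideal_pow_three]
        exact Ideal.mul_mem_mul (Ideal.mul_mem_mul h1 h2') h3'
      have key : a * mk' (X 1) = (-c1) * (mk' (X 0) * mk' (X 2) * mk' (X 2)) +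
          (-c2) * (mk' (X 2) * mk' (X 2) * mk' (X 2)) := by
        linear_combination mk' (X 1) * hc.symm +
          (c1 * mk' (X 0) + c2 * mk' (X 2)) * hrel
      rw [key]
      exact add_mem (Ideal.mul_mem_left _ _ (h3 _ _ _ hxI hzI hzI))
        (Ideal.mul_mem_left _ _ (h3 _ _ _ hzI hzI hzI))

end Final


end A1Aux

/-- In `A = k[x,y,z]/(xy+z²)` with `I = (x,z)`, the third symbolic power
`I^(3) = {a : ∃ s ∉ I, a·s ∈ I³}` equals the ideal `(x², xz)`. -/
theorem symbolic_power_three_of_A1 (k : Type*) [Field k] :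
    {a : A1Ring k | ∃ s ∉ (Ideal.span {A1x k, A1z k} : Ideal (A1Ring k)),
        a * s ∈ (Ideal.span {A1x k, A1z k} : Ideal (A1Ring k)) ^ 3}
      = (Ideal.span {A1x k ^ 2, A1x k * A1z k} : Ideal (A1Ring k)) := by
  exact A1Aux.final k
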